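/- Let μ > 1 be real, σ := !![0, 1; -1, 0], Z := diag(1, −1), and let X, Y be real 2×2 matrices with Y symmetric. Set C(μ) := √(μ² − 1)·X·Z, B(μ) := μ·I. Then Z·σ·Z = −σ, and over ℂ the Schur complement S(μ) := (μ·X·Xᵀ + Y + i·σ) − C(μ)·(B(μ) + i·σ)⁻¹·C(μ)ᵀ satisfies S(μ) = Y + i·(σ − X·σ·Xᵀ); in particular S(μ) is independent of μ. -/

import Mathlib

open Matrix Complex

/-- The one-mode symplectic form in HHW conventions, as a complex matrix. -/
noncomputable def symp : Matrix (Fin 2) (Fin 2) ℂ := !![0, 1; -1, 0]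

/-- `Z = diag(1, −1)` as a complex matrix. -/
noncomputable def Zmat : Matrix (Fin 2) (Fin 2) ℂ := !![1, 0; 0, -1]

/-- The Schur complement of the TMSV physicality matrix is μ-independent:
`Z σ Z = −σ`, and
`S(μ) = (μ X Xᵀ + Y + iσ) − C(μ)(μI + iσ)⁻¹ C(μ)ᵀ = Y + i(σ − X σ Xᵀ)`,
where `C(μ) = √(μ² − 1) X Z`. -/
theorem tmsv_schur_complement (μ : ℝ) (hμ : 1 < μ)
    (X Y : Matrix (Fin 2) (Fin 2) ℝ) (hY : Yᵀ = Y) :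
    Zmat * symp * Zmat = -symp ∧
    ((μ : ℂ) • (X.map Complex.ofReal * (X.map Complex.ofReal)ᵀ)
        + Y.map Complex.ofReal + Complex.I • symp)
      - ((Real.sqrt (μ ^ 2 - 1) : ℂ) • (X.map Complex.ofReal * Zmat))
        * ((μ : ℂ) • (1 : Matrix (Fin 2) (Fin 2) ℂ) + Complex.I • symp)⁻¹
        * ((Real.sqrt (μ ^ 2 - 1) : ℂ) • (X.map Complex.ofReal * Zmat))ᵀ
      = Y.map Complex.ofReal
        + Complex.I • (symp - X.map Complex.ofReal * symp * (X.map Complex.ofReal)ᵀ) := by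
  have hpos : (0:ℝ) < μ ^ 2 - 1 := by nlinarith
  have hne : ((μ:ℂ) ^ 2 - 1) ≠ 0 := by
    rw [show ((μ:ℂ)^2 - 1) = ((μ^2 - 1 : ℝ) : ℂ) by push_cast; ring]
    exact_mod_cast hpos.ne'
  constructor
  · ext i j; fin_cases i <;> fin_cases j <;> simp [symp, Zmat, mul_apply, Fin.sum_univ_two]
  · set M : Matrix (Fin 2) (Fin 2) ℂ := (μ : ℂ) • (1 : Matrix (Fin 2) (Fin 2) ℂ) + Complex.I • symp with hM
    set N : Matrix (Fin 2) (Fin 2) ℂ := (((μ:ℂ)^2 - 1)⁻¹) • ((μ : ℂ) • (1 : Matrix (Fin 2) (Fin 2) ℂ) - Complex.I • symp) with hN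
    have hinv : M⁻¹ = N := by
      apply Matrix.inv_eq_right_inv
      rw [hM, hN]
      ext i j
      fin_cases i <;> fin_cases j <;>
        simp [symp, mul_apply, Fin.sum_univ_two, Matrix.one_apply] <;>
        field_simp <;> ring_nf <;> rw [Complex.I_sq] <;> ring
    rw [hinv]
    set t : ℂ := (Real.sqrt (μ ^ 2 - 1) : ℂ) with ht
    have htt : t * t = ((μ:ℂ)^2 - 1) := by
      rw [ht, ← Complex.ofReal_mul, Real.mul_self_sqrt hpos.le]
      push_cast; ring
    set A : Matrix (Fin 2) (Fin 2) ℂ := X.map Complex.ofReal * Zmat with hA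
    have key : (t • A) * N * (t • A)ᵀ
        = A * ((μ : ℂ) • (1 : Matrix (Fin 2) (Fin 2) ℂ) - Complex.I • symp) * Aᵀ := by
      rw [hN]
      simp only [Matrix.transpose_smul, Matrix.smul_mul, Matrix.mul_smul, smul_smul]
      rw [show t * (((μ:ℂ)^2 - 1)⁻¹ * t) = (t * t) * ((μ:ℂ)^2 - 1)⁻¹ by ring, htt,
        mul_inv_cancel₀ hne, one_smul]
    rw [key, hA]
    ext i j
    fin_cases i <;> fin_cases j <;>
      simp [symp, Zmat, mul_apply, Fin.sum_univ_two, Matrix.transpose_apply,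
        Matrix.vecHead, Matrix.vecTail] <;> ring
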